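/- arXiv:2007.05862 — 4 statements merged into one kernel-verified Lean document; each statement's English description precedes it below -/
import Mathlib

section
/- Let X be a strongly irreducible shift space. Then any Borel probability measure on X that is nonsingular for the Gibbs relation T_X (i.e., the T_X-saturation of any null set is null) has full support. -/
open MeasureTheory

/-- The left shift by `k` on bi-infinite sequences. `shiftZ 1` is the shift map `σ`. -/
def shiftZ {A : Type*} (k : ℤ) (x : ℤ → A) : ℤ → A := fun n => x (n + k)

/-- The word `w` occurs in `x` at position `i`. -/
def occursAt {A : Type*} (x : ℤ → A) (w : List A) (i : ℤ) : Prop :=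
  ∀ j : Fin w.length, x (i + (j.1 : ℤ)) = w.get j

/-- The word `w` belongs to the language of `X`. -/
def InLanguage {A : Type*} (X : Set (ℤ → A)) (w : List A) : Prop :=
  ∃ x ∈ X, ∃ i : ℤ, occursAt x w i

/-- A shift space: a closed, shift-invariant subset of the full shift. -/
def IsShiftSpace {A : Type*} [TopologicalSpace A] (X : Set (ℤ → A)) : Prop :=
  IsClosed X ∧ ∀ k : ℤ, ∀ x ∈ X, shiftZ k x ∈ X

/-- `x` is doubly transitive in `X`. -/
def DoublyTransitive {A : Type*} (X : Set (ℤ → A)) (x : ℤ → A) : Prop :=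
  ∀ w : List A, InLanguage X w →
    (∀ N : ℤ, ∃ i : ℤ, N ≤ i ∧ occursAt x w i) ∧
    (∀ N : ℤ, ∃ i : ℤ, i ≤ N ∧ occursAt x w i)

/-- Irreducibility: any two words of the language can be joined within the language. -/
def IrreducibleShift {A : Type*} (X : Set (ℤ → A)) : Prop :=
  ∀ u v : List A, InLanguage X u → InLanguage X v →
    ∃ w : List A, InLanguage X (u ++ w ++ v)

/-- `μ` is fully supported on `X`: every open set meeting `X` has positive measure. -/
def FullSupportOn {A : Type*} [TopologicalSpace A] [MeasurableSpace A]
    (μ : Measure (ℤ → A)) (X : Set (ℤ → A)) : Prop :=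
  ∀ U : Set (ℤ → A), IsOpen U → (U ∩ X).Nonempty → 0 < μ U

/-- The Gibbs (homoclinic/tail) relation on `X`: both points lie in `X` and agree
outside a finite window. -/
def GibbsRel {A : Type*} (X : Set (ℤ → A)) (x y : ℤ → A) : Prop :=
  x ∈ X ∧ y ∈ X ∧ ∃ N : ℤ, ∀ n : ℤ, N < |n| → x n = y n

/-- Strong irreducibility: there is a gap `r` such that any two words of the language can be
joined by a connecting word of any prescribed length `s ≥ r`. -/
def StronglyIrreducible {A : Type*} (X : Set (ℤ → A)) : Prop :=
  ∃ r : ℕ, 1 ≤ r ∧ ∀ u v : List A, InLanguage X u → InLanguage X v →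
    ∀ s : ℕ, r ≤ s → ∃ w : List A, w.length = s ∧ InLanguage X (u ++ w ++ v)

/-- `μ` is nonsingular for the relation `Rel`: the saturation of any null Borel set is null. -/
def NonsingularFor {A : Type*} [MeasurableSpace A]
    (μ : MeasureTheory.Measure (ℤ → A)) (Rel : (ℤ → A) → (ℤ → A) → Prop) : Prop :=
  ∀ S : Set (ℤ → A), MeasurableSet S → μ S = 0 → μ {y | ∃ x ∈ S, Rel x y} = 0

lemma occursAt_ofFn_iff {A : Type*} (x : ℤ → A) {L : ℕ} (f : Fin L → A) (i : ℤ) :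
    occursAt x (List.ofFn f) i ↔ ∀ j : Fin L, x (i + j) = f j := by
  constructor
  · intro h j
    have := h (Fin.cast (List.length_ofFn (f := f)).symm j)
    rw [List.get_ofFn] at this
    simpa using this
  · intro h j
    rw [List.get_ofFn]
    have := h (Fin.cast (List.length_ofFn (f := f)) j)
    simpa using this

lemma occursAt_append {A : Type*} {x : ℤ → A} {a b : List A} {i : ℤ}
    (h : occursAt x (a ++ b) i) :
    occursAt x a i ∧ occursAt x b (i + a.length) := by
  constructor
  · intro j
    have hj : (j : ℕ) < (a ++ b).length := by
      have := j.2; simp only [List.length_append]; omega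
    have h2 := h ⟨j, hj⟩
    rw [show ((a++b).get ⟨(j:ℕ), hj⟩) = (a++b)[(j:ℕ)] from rfl,
      List.getElem_append_left j.2] at h2
    simpa using h2
  · intro j
    have hj : a.length + (j : ℕ) < (a ++ b).length := by
      have := j.2; simp only [List.length_append]; omega
    have h2 := h ⟨a.length + (j:ℕ), hj⟩
    rw [show ((a++b).get ⟨a.length + (j:ℕ), hj⟩) = (a++b)[a.length + (j:ℕ)] from rfl,
      List.getElem_append_right (Nat.le_add_right _ _)] at h2
    simp only [Nat.add_sub_cancel_left] at h2
    have : x (i + ↑a.length + ↑(j:ℕ)) = b[(j:ℕ)] := by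
      rw [← h2]; congr 1; push_cast; ring
    simpa using this

lemma gibbs_key {A : Type*} [Fintype A] [TopologicalSpace A] [DiscreteTopology A]
    (X : Set (ℤ → A)) (hX : IsShiftSpace X) (hsi : StronglyIrreducible X)
    (x : ℤ → A) (hx : x ∈ X) (N : ℕ) {y : ℤ → A} (hy : y ∈ X) :
    ∃ z ∈ X, (∀ m : ℤ, |m| ≤ (N:ℤ) → z m = x m) ∧
      ∃ M : ℤ, ∀ m : ℤ, M < |m| → z m = y m := by
  obtain ⟨r, hr1, hjoin⟩ := hsi
  set w0 : List A := List.ofFn (fun j : Fin (2*N+1) => x (-(N:ℤ) + j)) with hw0def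
  have hw0 : InLanguage X w0 :=
    ⟨x, hx, -(N:ℤ), (occursAt_ofFn_iff _ _ _).2 (fun j => rfl)⟩
  have H : ∀ t : ℕ, ∃ q ∈ X,
      (∀ j : Fin (2*N+1), q (-(N:ℤ) + j) = x (-(N:ℤ) + j)) ∧
      (∀ j : Fin (t+1), q (-((N:ℤ)+r+1+t) + j) = y (-((N:ℤ)+r+1+t) + j)) ∧
      (∀ j : Fin (t+1), q ((N:ℤ)+r+1 + j) = y ((N:ℤ)+r+1 + j)) := by
    intro t
    set k : ℤ := (N:ℤ) + r + 1 + t with hk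
    set u : List A := List.ofFn (fun j : Fin (t+1) => y (-k + j)) with hu
    set v : List A := List.ofFn (fun j : Fin (t+1) => y ((N:ℤ)+r+1 + j)) with hv
    have hul : InLanguage X u := ⟨y, hy, -k, (occursAt_ofFn_iff _ _ _).2 (fun j => rfl)⟩
    have hvl : InLanguage X v :=
      ⟨y, hy, (N:ℤ)+r+1, (occursAt_ofFn_iff _ _ _).2 (fun j => rfl)⟩
    obtain ⟨w1, hw1len, hw1⟩ := hjoin u w0 hul hw0 r le_rfl
    obtain ⟨w2, hw2len, hw2⟩ := hjoin (u ++ w1 ++ w0) v hw1 hvl r le_rfl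
    obtain ⟨p, hp, i, hocc⟩ := hw2
    refine ⟨shiftZ (i + k) p, hX.2 _ _ hp, ?_⟩
    have hocc' : occursAt (shiftZ (i+k) p) ((u ++ w1 ++ w0) ++ w2 ++ v) (-k) := by
      intro j
      have h2 := hocc j
      show p (-k + (j.1:ℤ) + (i + k)) = _
      rw [show -k + (j.1:ℤ) + (i + k) = i + j.1 by ring]
      exact h2
    set q := shiftZ (i+k) p with hq
    have h1 := occursAt_append hocc'
    have h2 := occursAt_append h1.1
    have h3 := occursAt_append h2.1
    have h4 := occursAt_append h3.1
    -- lengths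
    have lu : u.length = t+1 := by rw [hu, List.length_ofFn]
    have lw0 : w0.length = 2*N+1 := by rw [hw0def, List.length_ofFn]
    have e1 : -k + (((u ++ w1).length : ℕ) : ℤ) = -(N:ℤ) := by
      simp only [List.length_append, lu, hw1len]; push_cast [hk]; ring
    have e2 : -k + ((((u ++ w1 ++ w0) ++ w2).length : ℕ) : ℤ) = (N:ℤ)+r+1 := by
      simp only [List.length_append, lu, lw0, hw1len, hw2len]; push_cast [hk]; ring
    have hqu : ∀ j : Fin (t+1), q (-k + j) = y (-k + j) := by
      have := h4.1
      rw [hu, occursAt_ofFn_iff] at this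
      exact this
    have hqw : ∀ j : Fin (2*N+1), q (-(N:ℤ) + j) = x (-(N:ℤ) + j) := by
      have := h3.2
      rw [e1, hw0def, occursAt_ofFn_iff] at this
      exact this
    have hqv : ∀ j : Fin (t+1), q ((N:ℤ)+r+1 + j) = y ((N:ℤ)+r+1 + j) := by
      have := h1.2
      rw [e2, hv, occursAt_ofFn_iff] at this
      exact this
    exact ⟨hqw, hqu, hqv⟩
  choose g hgX hgw hgu hgv using H
  have hXc : IsCompact X := hX.1.isCompact
  obtain ⟨z, hzX, φ, hφ, hlim⟩ := hXc.tendsto_subseq hgX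
  have hcoord : ∀ m : ℤ, ∀ᶠ n in Filter.atTop, g (φ n) m = z m := by
    intro m
    have hm : Filter.Tendsto (fun n => g (φ n) m) Filter.atTop (nhds (z m)) :=
      ((continuous_apply m).tendsto z).comp hlim
    rw [show (nhds (z m)) = pure (z m) by rw [nhds_discrete], Filter.tendsto_pure] at hm
    exact hm
  refine ⟨z, hzX, ?_, (N:ℤ)+r, ?_⟩
  · intro m hm
    have habs := abs_le.1 hm
    have hall : ∀ n, g (φ n) m = x m := by
      intro n
      have hj : (m + N).toNat < 2*N+1 := by omega
      have h5 := hgw (φ n) ⟨(m+N).toNat, hj⟩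
      rw [show -(N:ℤ) + (((m+(N:ℤ)).toNat : ℕ) : ℤ) = m by
        rw [Int.toNat_of_nonneg (by omega)]; ring] at h5
      exact h5
    obtain ⟨n, hn⟩ := (hcoord m).exists
    rw [← hn, hall n]
  · intro m hm
    have hall : ∀ t, m.natAbs ≤ t → g t m = y m := by
      intro t ht
      rcases le_or_gt 0 m with hm0 | hm0
      · have habs : (N:ℤ)+r < m := by rwa [abs_of_nonneg hm0] at hm
        have hj : (m - ((N:ℤ)+r+1)).toNat < t+1 := by omega
        have h5 := hgv t ⟨(m - ((N:ℤ)+r+1)).toNat, hj⟩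
        rw [show (N:ℤ)+r+1 + (((m - ((N:ℤ)+r+1)).toNat : ℕ) : ℤ) = m by
          rw [Int.toNat_of_nonneg (by omega)]; ring] at h5
        exact h5
      · have habs : m < -((N:ℤ)+r) := by
          rw [abs_of_neg hm0] at hm; omega
        have hj : (m + ((N:ℤ)+r+1+t)).toNat < t+1 := by omega
        have h5 := hgu t ⟨(m + ((N:ℤ)+r+1+t)).toNat, hj⟩
        rw [show -((N:ℤ)+r+1+t) + (((m + ((N:ℤ)+r+1+t)).toNat : ℕ) : ℤ) = m by
          rw [Int.toNat_of_nonneg (by omega)]; ring] at h5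
        exact h5
    have hev : ∀ᶠ n in Filter.atTop, g (φ n) m = y m := by
      filter_upwards [Filter.eventually_ge_atTop m.natAbs] with n hn
      exact hall (φ n) (le_trans hn hφ.le_apply)
    obtain ⟨n, hn1, hn2⟩ := ((hcoord m).and hev).exists
    rw [← hn1, hn2]

/-- on a strongly irreducible shift space, every Borel probability measure
that is nonsingular for the Gibbs relation has full support. -/
theorem stmt4 {A : Type*} [Fintype A] [TopologicalSpace A] [DiscreteTopology A]
    [MeasurableSpace A] [BorelSpace A]
    (X : Set (ℤ → A)) (hX : IsShiftSpace X) (hsi : StronglyIrreducible X)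
    (μ : Measure (ℤ → A)) (hprob : IsProbabilityMeasure μ) (hconc : μ X = 1)
    (hns : NonsingularFor μ (GibbsRel X)) :
    FullSupportOn μ X := by
  intro U hU hne
  by_contra hcon
  have hU0 : μ U = 0 := le_antisymm (le_of_not_gt (by simpa using hcon)) zero_le
  obtain ⟨x, hxU, hxX⟩ := hne
  obtain ⟨I, u, hIu, hsub⟩ := isOpen_pi_iff.1 hU x hxU
  set N : ℕ := I.sup (fun i => i.natAbs) with hN
  set C : Set (ℤ → A) := {y | ∀ m : ℤ, |m| ≤ (N:ℤ) → y m = x m} with hC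
  have hCU : C ⊆ U := by
    intro y hyC
    apply hsub
    intro i hi
    have h1 : i.natAbs ≤ N := Finset.le_sup hi
    have h2 : |i| ≤ (N:ℤ) := by rw [Int.abs_eq_natAbs]; exact_mod_cast h1
    rw [hyC i h2]
    exact (hIu i hi).2
  have hCmeas : MeasurableSet C := by
    have : C = ⋂ m ∈ {m : ℤ | |m| ≤ (N:ℤ)}, (fun y : ℤ → A => y m) ⁻¹' {x m} := by
      ext y; simp [hC]
    rw [this]
    exact MeasurableSet.biInter (Set.to_countable _)
      (fun m _ => (measurable_pi_apply m) (measurableSet_singleton _))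
  have hXmeas : MeasurableSet X := hX.1.measurableSet
  set S := C ∩ X with hS
  have hS0 : μ S = 0 :=
    le_antisymm (le_trans (measure_mono (Set.inter_subset_left.trans hCU)) hU0.le) zero_le
  have hsat := hns S (hCmeas.inter hXmeas) hS0
  have hXsub : X ⊆ {y | ∃ s ∈ S, GibbsRel X s y} := by
    intro y hyX
    obtain ⟨z, hzX, hzC, M, hzM⟩ := gibbs_key X hX hsi x hxX N hyX
    exact ⟨z, ⟨hzC, hzX⟩, hzX, hyX, M, hzM⟩
  have hX0 : μ X = 0 :=
    le_antisymm (le_trans (measure_mono hXsub) hsat.le) zero_le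
  rw [hconc] at hX0
  exact one_ne_zero hX0
end

section
/- Let X be an irreducible shift of finite type of period p with cyclically moving classes X_0, ..., X_{p-1}, and let f be in SV(X). Define R_p f = sum_{j=0}^{p-1} f o sigma^{-j}, viewed as a function on X_0 equipped with sigma^p (a shift space over alphabet contained in B_p(X)). Then R_p f has summable variation on (X_0, sigma^p); in fact sum_{k>=0} v_{kp}(f o sigma^{-j}) <= (1/p) ||f o sigma^{-j}||_SV + constant, so ||R_p f||_{SV(X_0)} is finite. -/
/-- The `k`-th variation of `f` over `X`: the sup of `|f x - f y|` over pairs in `X`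
agreeing on the window `[-k, k]`. -/
noncomputable def varOf {A : Type*} (X : Set (ℤ → A)) (f : (ℤ → A) → ℝ) (k : ℕ) : ℝ :=
  sSup {d : ℝ | ∃ x ∈ X, ∃ y ∈ X, (∀ i : ℤ, |i| ≤ (k : ℤ) → x i = y i) ∧ d = |f x - f y|}

/-- The `(-1)`-st variation: the sup norm of `f` over `X`. -/
noncomputable def supAbsOn {A : Type*} (X : Set (ℤ → A)) (f : (ℤ → A) → ℝ) : ℝ :=
  sSup {d : ℝ | ∃ x ∈ X, d = |f x|}

/-- `f` has summable variation on `X`. -/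
def HasSummableVariation {A : Type*} (X : Set (ℤ → A)) (f : (ℤ → A) → ℝ) : Prop :=
  Summable (varOf X f)

/-- The SV-norm `‖f‖ = v₋₁(f) + ∑_{k ≥ 0} v_k(f)` (i.e. `∑_{k ≥ 0} v_{k-1}(f)`). -/
noncomputable def SVnorm {A : Type*} (X : Set (ℤ → A)) (f : (ℤ → A) → ℝ) : ℝ :=
  supAbsOn X f + ∑' k : ℕ, varOf X f k

/-- A shift of finite type: defined by excluding a finite set of words of some length `n`. -/
def IsSFT {A : Type*} (X : Set (ℤ → A)) : Prop :=
  ∃ (n : ℕ) (F : Finset (List A)),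
    X = {x | ∀ i : ℤ, (List.ofFn fun j : Fin n => x (i + (j.1 : ℤ))) ∉ F}

/-- The `k`-th variation of `g` on `X₀` viewed as a shift space over the alphabet of
`p`-blocks: the sup of `|g x - g y|` over pairs in `X₀` agreeing on the `p`-blocks
indexed by `[-k, k]`, i.e. on the coordinates `[-kp, kp + p - 1]`. -/
noncomputable def varBlock {A : Type*} (p : ℕ) (X₀ : Set (ℤ → A)) (g : (ℤ → A) → ℝ)
    (k : ℕ) : ℝ :=
  sSup {d : ℝ | ∃ x ∈ X₀, ∃ y ∈ X₀,
    (∀ i : ℤ, -((k : ℤ) * p) ≤ i → i ≤ (k : ℤ) * p + p - 1 → x i = y i) ∧ d = |g x - g y|}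

/-- `R_p f = ∑_{j=0}^{p-1} f ∘ σ^{-j}`. -/
noncomputable def Rp {A : Type*} (p : ℕ) (f : (ℤ → A) → ℝ) : (ℤ → A) → ℝ :=
  fun x => ∑ j ∈ Finset.range p, f (shiftZ (-(j : ℤ)) x)

section Aux

variable {A : Type*} {X : Set (ℤ → A)} {f : (ℤ → A) → ℝ} {M : ℝ}

lemma varSet_bddAbove (hM : ∀ x, |f x| ≤ M) (k : ℕ) :
    BddAbove {d : ℝ | ∃ x ∈ X, ∃ y ∈ X,
      (∀ i : ℤ, |i| ≤ (k : ℤ) → x i = y i) ∧ d = |f x - f y|} := by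
  refine ⟨2 * M, ?_⟩
  rintro d ⟨x, -, y, -, -, rfl⟩
  have h1 := abs_le.mp (hM x)
  have h2 := abs_le.mp (hM y)
  rw [abs_sub_le_iff]
  constructor <;> linarith

lemma le_varOf (hM : ∀ x, |f x| ≤ M) {x y : ℤ → A} (hx : x ∈ X) (hy : y ∈ X) {k : ℕ}
    (h : ∀ i : ℤ, |i| ≤ (k : ℤ) → x i = y i) : |f x - f y| ≤ varOf X f k :=
  le_csSup (varSet_bddAbove hM k) ⟨x, hx, y, hy, h, rfl⟩

lemma varOf_nonneg' (hM : ∀ x, |f x| ≤ M) (k : ℕ) : 0 ≤ varOf X f k := by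
  rcases Set.eq_empty_or_nonempty X with h | ⟨x, hx⟩
  · have hset : {d : ℝ | ∃ x ∈ X, ∃ y ∈ X,
        (∀ i : ℤ, |i| ≤ (k : ℤ) → x i = y i) ∧ d = |f x - f y|} = ∅ := by
      simp [h]
    rw [varOf, hset, Real.sSup_empty]
  · simpa using le_varOf hM hx hx (fun i _ => rfl)

lemma varOf_shift_le (hXinv : ∀ k : ℤ, ∀ x ∈ X, shiftZ k x ∈ X) (hM : ∀ x, |f x| ≤ M)
    (j : ℕ) {m K : ℕ} (h : m + j ≤ K) :
    varOf X (fun x => f (shiftZ (-(j : ℤ)) x)) K ≤ varOf X f m := by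
  refine Real.sSup_le ?_ (varOf_nonneg' hM m)
  rintro d ⟨x, hx, y, hy, hagree, rfl⟩
  refine le_varOf hM (hXinv _ _ hx) (hXinv _ _ hy) (fun i hi => ?_)
  show x (i + -(j : ℤ)) = y (i + -(j : ℤ))
  apply hagree
  have hib := abs_le.mp hi
  have hj0 : (0 : ℤ) ≤ (j : ℤ) := Int.natCast_nonneg j
  have hK : (m : ℤ) + (j : ℤ) ≤ (K : ℤ) := by exact_mod_cast h
  rw [abs_le]
  constructor <;> linarith [hib.1, hib.2]

end Aux

/-- for an irreducible SFT `X` of period `p` with cyclically moving classes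
`C i` and `f ∈ SV(X)`, the function `R_p f` has summable variation on `(C 0, σᵖ)`;
quantitatively, `∑_{k ≥ 0} v_{kp}(f ∘ σ^{-j}) ≤ (1/p)‖f ∘ σ^{-j}‖_SV + constant`. -/
theorem stmt12 {A : Type*} [Fintype A] [TopologicalSpace A] [DiscreteTopology A]
    (X : Set (ℤ → A)) (hX : IsShiftSpace X) (hSFT : IsSFT X) (hirr : IrreducibleShift X)
    (p : ℕ) (hp : 0 < p) (C : ℤ → Set (ℤ → A))
    (hper : ∀ i : ℤ, C (i + p) = C i)
    (hclosed : ∀ i : ℤ, IsClosed (C i))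
    (hdisj : ∀ i j : ℤ, 0 ≤ i → i < j → j < p → Disjoint (C i) (C j))
    (hcover : X = ⋃ i ∈ Finset.range p, C (i : ℤ))
    (hcycle : ∀ i : ℤ, shiftZ 1 '' C i = C (i + 1))
    (f : (ℤ → A) → ℝ) (hf : Continuous f) (hsv : HasSummableVariation X f) :
    Summable (varBlock p (C 0) (Rp p f)) ∧
    (∀ j : ℕ, j < p →
      (Summable fun k : ℕ => varOf X (fun x => f (shiftZ (-(j : ℤ)) x)) (k * p)) ∧
      ∃ Cst : ℝ, (∑' k : ℕ, varOf X (fun x => f (shiftZ (-(j : ℤ)) x)) (k * p)) ≤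
        (1 / p) * SVnorm X (fun x => f (shiftZ (-(j : ℤ)) x)) + Cst) := by
  -- A global bound on |f|
  obtain ⟨M0, hM0⟩ := isCompact_univ.exists_bound_of_continuousOn hf.continuousOn
  set M : ℝ := max M0 0 with hMdef
  have hM : ∀ x, |f x| ≤ M := fun x =>
    le_trans (by simpa [Real.norm_eq_abs] using hM0 x (Set.mem_univ x)) (le_max_left _ _)
  have hC0X : C 0 ⊆ X := by
    intro x hx
    rw [hcover]
    exact Set.mem_iUnion₂.mpr ⟨0, Finset.mem_range.mpr hp, by simpa using hx⟩
  -- bound on Rp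
  have hRpb : ∀ x, |Rp p f x| ≤ (p : ℝ) * M := by
    intro x
    calc |Rp p f x| ≤ ∑ j ∈ Finset.range p, |f (shiftZ (-(j : ℤ)) x)| :=
          Finset.abs_sum_le_sum_abs _ _
      _ ≤ ∑ _j ∈ Finset.range p, M := Finset.sum_le_sum (fun j _ => hM _)
      _ = (p : ℝ) * M := by simp [mul_comm]
  -- nonnegativity of varBlock
  have hvbnn : ∀ k, 0 ≤ varBlock p (C 0) (Rp p f) k := by
    intro k
    rcases Set.eq_empty_or_nonempty (C 0) with h | ⟨x, hx⟩
    · have hset : {d : ℝ | ∃ x ∈ C 0, ∃ y ∈ C 0,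
          (∀ i : ℤ, -((k : ℤ) * p) ≤ i → i ≤ (k : ℤ) * p + p - 1 → x i = y i) ∧
          d = |Rp p f x - Rp p f y|} = ∅ := by simp [h]
      rw [varBlock, hset, Real.sSup_empty]
    · have hbdd : BddAbove {d : ℝ | ∃ x ∈ C 0, ∃ y ∈ C 0,
          (∀ i : ℤ, -((k : ℤ) * p) ≤ i → i ≤ (k : ℤ) * p + p - 1 → x i = y i) ∧
          d = |Rp p f x - Rp p f y|} := by
        refine ⟨2 * ((p : ℝ) * M), ?_⟩
        rintro d ⟨a, -, b, -, -, rfl⟩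
        have h1 := abs_le.mp (hRpb a)
        have h2 := abs_le.mp (hRpb b)
        rw [abs_sub_le_iff]
        constructor <;> linarith
      have hmem : (0 : ℝ) ∈ {d : ℝ | ∃ x ∈ C 0, ∃ y ∈ C 0,
          (∀ i : ℤ, -((k : ℤ) * p) ≤ i → i ≤ (k : ℤ) * p + p - 1 → x i = y i) ∧
          d = |Rp p f x - Rp p f y|} := ⟨x, hx, x, hx, fun _ _ _ => rfl, by simp⟩
      exact le_csSup hbdd hmem
  -- key bound on varBlock
  have hvb : ∀ k : ℕ, varBlock p (C 0) (Rp p f) (k + 1) ≤ (p : ℝ) * varOf X f (k + 1) := by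
    intro k
    rw [varBlock]
    refine Real.sSup_le ?_ (mul_nonneg (Nat.cast_nonneg p) (varOf_nonneg' hM _))
    rintro d ⟨x, hx, y, hy, hagree, rfl⟩
    have key : ∀ jj ∈ Finset.range p,
        |f (shiftZ (-(jj : ℤ)) x) - f (shiftZ (-(jj : ℤ)) y)| ≤ varOf X f (k + 1) := by
      intro jj hjj
      refine le_varOf hM (hX.2 _ _ (hC0X hx)) (hX.2 _ _ (hC0X hy)) (fun i hi => ?_)
      show x (i + -(jj : ℤ)) = y (i + -(jj : ℤ))
      have hib := abs_le.mp hi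
      have hjjlt : (jj : ℤ) < (p : ℤ) := by exact_mod_cast Finset.mem_range.mp hjj
      have hjj0 : (0 : ℤ) ≤ (jj : ℤ) := Int.natCast_nonneg jj
      have hk0 : (0 : ℤ) ≤ (k : ℤ) := Int.natCast_nonneg k
      have hp1 : (1 : ℤ) ≤ (p : ℤ) := by exact_mod_cast hp
      apply hagree
      · push_cast
        push_cast at hib
        nlinarith [hib.1, mul_nonneg hk0 (by linarith : (0:ℤ) ≤ (p:ℤ) - 1)]
      · push_cast
        push_cast at hib
        nlinarith [hib.2, mul_nonneg hk0 (by linarith : (0:ℤ) ≤ (p:ℤ) - 1)]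
    calc |Rp p f x - Rp p f y|
        = |∑ jj ∈ Finset.range p, (f (shiftZ (-(jj : ℤ)) x) - f (shiftZ (-(jj : ℤ)) y))| := by
          simp only [Rp, ← Finset.sum_sub_distrib]
      _ ≤ ∑ jj ∈ Finset.range p, |f (shiftZ (-(jj : ℤ)) x) - f (shiftZ (-(jj : ℤ)) y)| :=
          Finset.abs_sum_le_sum_abs _ _
      _ ≤ ∑ _jj ∈ Finset.range p, varOf X f (k + 1) := Finset.sum_le_sum key
      _ = (p : ℝ) * varOf X f (k + 1) := by simp [mul_comm]
  -- summability of varBlock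
  have hsum1 : Summable (fun k : ℕ => varBlock p (C 0) (Rp p f) (k + 1)) :=
    Summable.of_nonneg_of_le (fun k => hvbnn _) hvb
      (((summable_nat_add_iff 1).mpr hsv).mul_left (p : ℝ))
  have hsumB : Summable (varBlock p (C 0) (Rp p f)) := (summable_nat_add_iff 1).mp hsum1
  refine ⟨hsumB, fun j hj => ?_⟩
  set g : (ℤ → A) → ℝ := fun x => f (shiftZ (-(j : ℤ)) x) with hgdef
  have hMg : ∀ x, |g x| ≤ M := fun x => hM _
  have hgs : ∀ k : ℕ, varOf X g ((k + 1) * p) ≤ varOf X f (k + 1) := by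
    intro k
    refine varOf_shift_le hX.2 hM j ?_
    have h1 : k ≤ k * p := Nat.le_mul_of_pos_right k hp
    have h2 : (k + 1) * p = k * p + p := by ring
    have h3 : j + 1 ≤ p := hj
    linarith
  have hsj : Summable (fun k : ℕ => varOf X g (k * p)) := by
    refine (summable_nat_add_iff 1).mp ?_
    exact Summable.of_nonneg_of_le (fun k => varOf_nonneg' hMg _) (fun k => hgs k)
      ((summable_nat_add_iff 1).mpr hsv)
  refine ⟨hsj, ⟨(∑' k : ℕ, varOf X g (k * p)) - (1 / p) * SVnorm X g, by linarith⟩⟩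
end

section
/- Let X be an irreducible shift of finite type of period p with cyclically moving classes X_i, let f be a continuous function on X, and let mu be a shift-invariant measure on X corresponding to the sigma^p-invariant measure mu' = p mu|_{X_0} on X_0. Then h_X(mu, sigma) + integral of f dmu = (1/p)( h_{X_0}(mu', sigma^p) + integral of R_p f dmu' ), where R_p f = sum_{j=0}^{p-1} f o sigma^{-j}. Consequently, mu is an equilibrium measure for f on (X, sigma) if and only if mu' is an equilibrium measure for R_p f on (X_0, sigma^p). -/
open MeasureTheory
open scoped ENNReal

/-- `μ` is an equilibrium measure for the potential `f` on `(X, T)`, with respect to an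
entropy functional `ent` (the Kolmogorov-Sinai entropy of the system `(T, ·)`): among all
`T`-invariant probability measures concentrated on `X`, it maximizes `ent + ∫ f`. -/
def IsEquilibriumFor {A : Type*} [MeasurableSpace A]
    (ent : Measure (ℤ → A) → ℝ) (T : (ℤ → A) → (ℤ → A)) (X : Set (ℤ → A))
    (f : (ℤ → A) → ℝ) (μ : Measure (ℤ → A)) : Prop :=
  IsProbabilityMeasure μ ∧ μ X = 1 ∧ μ.map T = μ ∧
    ∀ lam : Measure (ℤ → A), IsProbabilityMeasure lam → lam X = 1 → lam.map T = lam →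
      ent lam + ∫ x, f x ∂lam ≤ ent μ + ∫ x, f x ∂μ

lemma shiftZ_shiftZ {A : Type*} (k m : ℤ) (x : ℤ → A) :
    shiftZ k (shiftZ m x) = shiftZ (m + k) x := by
  funext n; simp [shiftZ, add_assoc, add_comm k m]

lemma shiftZ_comp {A : Type*} (k m : ℤ) :
    (shiftZ k : (ℤ → A) → _) ∘ shiftZ m = shiftZ (m + k) := by
  funext x; exact shiftZ_shiftZ k m x

lemma shiftZ_zero {A : Type*} : (shiftZ 0 : (ℤ → A) → (ℤ → A)) = id := by
  funext x n; simp [shiftZ]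

lemma continuous_shiftZ {A : Type*} [TopologicalSpace A] (k : ℤ) :
    Continuous (shiftZ k : (ℤ → A) → (ℤ → A)) :=
  continuous_pi fun n => continuous_apply (n + k)

lemma preimage_shiftZ {A : Type*} (k : ℤ) (S : Set (ℤ → A)) :
    shiftZ k ⁻¹' S = shiftZ (-k) '' S := by
  ext x
  constructor
  · intro hx
    exact ⟨shiftZ k x, hx, by rw [shiftZ_shiftZ]; simp [shiftZ_zero]⟩
  · rintro ⟨y, hy, rfl⟩
    simpa [Set.mem_preimage, shiftZ_shiftZ, shiftZ_zero] using hy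

section Main
variable {A : Type*} [Fintype A] [TopologicalSpace A] [DiscreteTopology A]
    [MeasurableSpace A] [BorelSpace A]

lemma measurable_shiftZ (k : ℤ) : Measurable (shiftZ k : (ℤ → A) → (ℤ → A)) :=
  (continuous_shiftZ k).measurable

lemma integrable_cont (f : (ℤ → A) → ℝ) (hf : Continuous f)
    (ν : Measure (ℤ → A)) [IsFiniteMeasure ν] : Integrable f ν :=
  hf.integrable_of_hasCompactSupport ((isClosed_tsupport f).isCompact)

lemma map_shiftZ (lam : Measure (ℤ → A)) (hinv : lam.map (shiftZ 1) = lam) (k : ℤ) :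
    lam.map (shiftZ k) = lam := by
  have hneg : lam.map (shiftZ (-1)) = lam := by
    conv_lhs => rw [← hinv]
    rw [Measure.map_map (measurable_shiftZ _) (measurable_shiftZ _), shiftZ_comp]
    simp [shiftZ_zero]
  induction k using Int.induction_on with
  | zero => simp [shiftZ_zero]
  | succ k ih =>
    rw [show ((k : ℤ) + 1) = (k : ℤ) + 1 from rfl, ← shiftZ_comp (1 : ℤ) (k : ℤ),
      ← Measure.map_map (measurable_shiftZ _) (measurable_shiftZ _), ih, hinv]
  | pred k ih =>
    rw [show (-(k : ℤ) - 1) = (-(k : ℤ)) + (-1) by ring, ← shiftZ_comp (-1 : ℤ) (-(k : ℤ)),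
      ← Measure.map_map (measurable_shiftZ _) (measurable_shiftZ _), ih, hneg]

variable (p : ℕ) (C : ℤ → Set (ℤ → A))
    (hcycle : ∀ i : ℤ, shiftZ 1 '' C i = C (i + 1))

include hcycle in
lemma image_shiftZ_C (k i : ℤ) : shiftZ k '' C i = C (i + k) := by
  have hneg : ∀ j : ℤ, shiftZ (-1) '' C j = C (j - 1) := by
    intro j
    rw [show C j = shiftZ 1 '' C (j - 1) by rw [hcycle]; ring_nf, ← Set.image_comp,
      shiftZ_comp, show (1 + -1 : ℤ) = 0 by ring, shiftZ_zero]
    simp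
  induction k using Int.induction_on generalizing i with
  | zero => simp [shiftZ_zero]
  | succ k ih =>
    rw [← shiftZ_comp (1 : ℤ) (k : ℤ), Set.image_comp, ih, hcycle, add_assoc]
  | pred k ih =>
    rw [show (-(k : ℤ) - 1) = (-(k : ℤ)) + (-1) by ring, ← shiftZ_comp (-1 : ℤ) (-(k : ℤ)),
      Set.image_comp, ih, hneg]
    ring_nf

include hcycle in
lemma preimage_shiftZ_C (k i : ℤ) : shiftZ k ⁻¹' C i = C (i - k) := by
  rw [preimage_shiftZ, image_shiftZ_C C hcycle, sub_eq_add_neg]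

variable (hclosed : ∀ i : ℤ, IsClosed (C i))

include hcycle hclosed in
lemma restrict_map (lam : Measure (ℤ → A)) (hinv : lam.map (shiftZ 1) = lam) (k i : ℤ) :
    (lam.restrict (C i)).map (shiftZ k) = lam.restrict (C (i + k)) := by
  ext B hB
  rw [Measure.map_apply (measurable_shiftZ _) hB, Measure.restrict_apply hB,
    Measure.restrict_apply (hB.preimage (measurable_shiftZ _)),
    show C i = shiftZ k ⁻¹' C (i + k) by rw [preimage_shiftZ_C C hcycle]; ring_nf,
    ← Set.preimage_inter]
  have := map_shiftZ lam hinv k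
  conv_rhs => rw [← this]
  rw [Measure.map_apply (measurable_shiftZ _) (hB.inter (hclosed _).measurableSet)]


variable (X : Set (ℤ → A)) (hp : 0 < p)
    (hper : ∀ i : ℤ, C (i + p) = C i)
    (hdisj : ∀ i j : ℤ, 0 ≤ i → i < j → j < p → Disjoint (C i) (C j))
    (hcover : X = ⋃ i ∈ Finset.range p, C (i : ℤ))

include hdisj in
lemma pairwise_disj : Set.Pairwise (↑(Finset.range p)) (Function.onFun Disjoint fun i : ℕ => C (i : ℤ)) := by
  intro i hi j hj hij
  simp only [Finset.coe_range, Set.mem_Iio] at hi hj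
  rcases lt_or_gt_of_ne hij with h | h
  · exact hdisj i j (by positivity) (by exact_mod_cast h) (by exact_mod_cast hj)
  · exact (hdisj j i (by positivity) (by exact_mod_cast h) (by exact_mod_cast hi)).symm

include hcycle hclosed hper hdisj hcover in
lemma measure_C0 (lam : Measure (ℤ → A)) [IsProbabilityMeasure lam] (hconc : lam X = 1)
    (hinv : lam.map (shiftZ 1) = lam) : (p : ℝ≥0∞) * lam (C 0) = 1 := by
  have hstep : ∀ i : ℤ, lam (C i) = lam (C (i + 1)) := by
    intro i
    have h1 : lam.map (shiftZ (-1)) = lam := map_shiftZ lam hinv (-1)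
    calc lam (C i) = (lam.map (shiftZ (-1))) (C i) := by rw [h1]
      _ = lam (shiftZ (-1) ⁻¹' C i) :=
          Measure.map_apply (measurable_shiftZ _) (hclosed _).measurableSet
      _ = lam (C (i + 1)) := by
          rw [preimage_shiftZ_C C hcycle]; ring_nf
  have hconst : ∀ j : ℕ, lam (C (j : ℤ)) = lam (C 0) := by
    intro j
    induction j with
    | zero => rfl
    | succ n ih => rw [show ((n + 1 : ℕ) : ℤ) = (n : ℤ) + 1 by push_cast; ring, ← hstep, ih]
  have hsum : lam X = ∑ i ∈ Finset.range p, lam (C (i : ℤ)) := by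
    rw [hcover]
    exact measure_biUnion_finset (pairwise_disj p C hdisj)
      (fun i _ => (hclosed _).measurableSet)
  rw [hconc] at hsum
  simp only [hconst, Finset.sum_const, Finset.card_range, nsmul_eq_mul] at hsum
  exact hsum.symm

include hp hcycle hclosed hper hdisj hcover in
lemma int_Rp (f : (ℤ → A) → ℝ) (hf : Continuous f)
    (lam : Measure (ℤ → A)) [IsProbabilityMeasure lam] (hconc : lam X = 1)
    (hinv : lam.map (shiftZ 1) = lam) :
    (∫ x, (fun x => ∑ j ∈ Finset.range p, f (shiftZ (-(j : ℤ)) x)) x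
        ∂((p : ℝ≥0∞) • lam.restrict (C 0))) = p * ∫ x, f x ∂lam := by
  rw [integral_smul_measure]
  have h1 : ∫ x, (∑ j ∈ Finset.range p, f (shiftZ (-(j : ℤ)) x)) ∂(lam.restrict (C 0))
      = ∑ j ∈ Finset.range p, ∫ x, f (shiftZ (-(j : ℤ)) x) ∂(lam.restrict (C 0)) := by
    apply integral_finset_sum
    intro j _
    exact integrable_cont _ (hf.comp (continuous_shiftZ _)) _
  have h2 : ∀ j : ℕ, ∫ x, f (shiftZ (-(j : ℤ)) x) ∂(lam.restrict (C 0))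
      = ∫ x, f x ∂(lam.restrict (C (-(j : ℤ)))) := by
    intro j
    have : lam.restrict (C 0) = (lam.restrict (C (-(j:ℤ)))).map (shiftZ (j:ℤ)) := by
      rw [restrict_map C hcycle hclosed lam hinv]; ring_nf
    rw [this, integral_map (measurable_shiftZ _).aemeasurable
      (show AEStronglyMeasurable (fun x => f (shiftZ (-(j:ℤ)) x))
          ((lam.restrict (C (-(j:ℤ)))).map (shiftZ (j:ℤ))) from
        (hf.comp (continuous_shiftZ _)).aestronglyMeasurable)]
    simp only [shiftZ_shiftZ, add_neg_cancel, shiftZ_zero, id_eq]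
  have h3 : ∑ j ∈ Finset.range p, ∫ x, f x ∂(lam.restrict (C (-(j : ℤ))))
      = ∑ i ∈ Finset.range p, ∫ x, f x ∂(lam.restrict (C (i : ℤ))) := by
    apply Finset.sum_nbij' (fun j => (p - j) % p) (fun i => (p - i) % p)
    · intro j hj; exact Finset.mem_range.mpr (Nat.mod_lt _ hp)
    · intro i hi; exact Finset.mem_range.mpr (Nat.mod_lt _ hp)
    · intro j hj
      simp only [Finset.mem_range] at hj
      rcases Nat.eq_zero_or_pos j with rfl | hj0
      · simp [Nat.mod_self]
      · have e1 : (p - j) % p = p - j := Nat.mod_eq_of_lt (by omega)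
        rw [e1, Nat.sub_sub_self hj.le, Nat.mod_eq_of_lt hj]
    · intro i hi
      simp only [Finset.mem_range] at hi
      rcases Nat.eq_zero_or_pos i with rfl | hi0
      · simp [Nat.mod_self]
      · have e1 : (p - i) % p = p - i := Nat.mod_eq_of_lt (by omega)
        rw [e1, Nat.sub_sub_self hi.le, Nat.mod_eq_of_lt hi]
    · intro j hj
      simp only [Finset.mem_range] at hj
      have hC : C (-(j:ℤ)) = C ((((p - j) % p : ℕ)) : ℤ) := by
        rcases Nat.eq_zero_or_pos j with rfl | hj0
        · simp [Nat.mod_self]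
        · rw [Nat.mod_eq_of_lt (by omega), ← hper (-(j:ℤ))]
          have e2 : ((p - j : ℕ) : ℤ) = -(j:ℤ) + p := by omega
          rw [e2]
      rw [hC]
  have h4 : ∑ i ∈ Finset.range p, ∫ x, f x ∂(lam.restrict (C (i : ℤ))) = ∫ x, f x ∂lam := by
    have := integral_biUnion_finset (μ := lam) (f := f) (Finset.range p)
      (s := fun i : ℕ => C (i : ℤ)) (fun i _ => (hclosed _).measurableSet)
      (pairwise_disj p C hdisj)
      (fun i _ => (integrable_cont _ hf _).integrableOn)
    rw [← this, ← hcover, Measure.restrict_eq_self_of_ae_mem]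
    rw [ae_iff]
    have hXm : MeasurableSet X := by
      rw [hcover]; exact Finset.measurableSet_biUnion _ fun i _ => (hclosed _).measurableSet
    have : {a | ¬ a ∈ X} = Xᶜ := rfl
    rw [this, measure_compl hXm (measure_ne_top _ _), hconc]
    simp
  rw [h1]
  simp only [h2]
  rw [h3, h4]
  simp


include hp hcycle hclosed hper hdisj hcover in
lemma avg_lemma (lam : Measure (ℤ → A)) [IsProbabilityMeasure lam]
    (hC0 : lam (C 0) = 1) (hinvp : lam.map (shiftZ (p : ℤ)) = lam) :
    ∃ lamBar : Measure (ℤ → A), IsProbabilityMeasure lamBar ∧ lamBar X = 1 ∧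
      lamBar.map (shiftZ 1) = lamBar ∧ (p : ℝ≥0∞) • lamBar.restrict (C 0) = lam := by
  have hpe0 : (p : ℝ≥0∞) ≠ 0 := by exact_mod_cast hp.ne'
  have hpet : (p : ℝ≥0∞) ≠ ∞ := ENNReal.natCast_ne_top p
  set ν : ℕ → Measure (ℤ → A) := fun j => lam.map (shiftZ (j : ℤ)) with hν
  have hνprob : ∀ j, IsProbabilityMeasure (ν j) := fun j =>
    Measure.isProbabilityMeasure_map (measurable_shiftZ _).aemeasurable
  have hνCj : ∀ j : ℕ, ν j (C (j : ℤ)) = 1 := by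
    intro j
    rw [hν, Measure.map_apply (measurable_shiftZ _) (hclosed _).measurableSet,
      preimage_shiftZ_C C hcycle, sub_self, hC0]
  have hνX : ∀ j ∈ Finset.range p, ν j X = 1 := by
    intro j hj
    refine le_antisymm prob_le_one ?_
    calc (1 : ℝ≥0∞) = ν j (C (j : ℤ)) := (hνCj j).symm
      _ ≤ ν j X := by
          apply measure_mono
          rw [hcover]
          intro x hx
          exact Set.mem_biUnion hj hx
  refine ⟨(p : ℝ≥0∞)⁻¹ • ∑ j ∈ Finset.range p, ν j, ?_, ?_, ?_, ?_⟩
  · constructor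
    simp only [Measure.smul_apply, Measure.finset_sum_apply, measure_univ, smul_eq_mul,
      Finset.sum_const, Finset.card_range, nsmul_eq_mul, mul_one]
    exact ENNReal.inv_mul_cancel hpe0 hpet
  · rw [Measure.smul_apply, Measure.finset_sum_apply, Finset.sum_congr rfl hνX]
    simp only [Finset.sum_const, Finset.card_range, nsmul_eq_mul, mul_one, smul_eq_mul]
    exact ENNReal.inv_mul_cancel hpe0 hpet
  · have hXm : MeasurableSet X := by
      rw [hcover]; exact Finset.measurableSet_biUnion _ fun i _ => (hclosed _).measurableSet
    ext B hB
    rw [Measure.map_apply (measurable_shiftZ _) hB]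
    simp only [Measure.smul_apply, Measure.finset_sum_apply, smul_eq_mul]
    congr 1
    set a : ℕ → ℝ≥0∞ := fun k => lam (shiftZ (k : ℤ) ⁻¹' B) with ha
    have hterm : ∀ j : ℕ, ν j (shiftZ 1 ⁻¹' B) = a (j + 1) := by
      intro j
      rw [hν, Measure.map_apply (measurable_shiftZ _) (hB.preimage (measurable_shiftZ _)),
        ← Set.preimage_comp, shiftZ_comp, ha]
      norm_num
    have htermB : ∀ j : ℕ, ν j B = a j := fun j =>
      Measure.map_apply (measurable_shiftZ _) hB
    simp only [hterm, htermB]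
    have hap : a p = a 0 := by
      rw [ha]
      simp only [Int.natCast_zero, shiftZ_zero, Set.preimage_id]
      rw [← Measure.map_apply (measurable_shiftZ _) hB, hinvp]
    have e1 := Finset.sum_range_succ' a p
    have e2 := Finset.sum_range_succ a p
    rw [e2, hap] at e1
    exact (ENNReal.add_left_inj (measure_ne_top lam _)).mp e1.symm
  · ext B hB
    rw [Measure.smul_apply, Measure.restrict_apply hB, Measure.smul_apply,
      Measure.finset_sum_apply, smul_eq_mul, smul_eq_mul, ← mul_assoc,
      ENNReal.mul_inv_cancel hpe0 hpet, one_mul]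
    have hcompl : lam (C 0)ᶜ = 0 := by
      rw [measure_compl (hclosed _).measurableSet (measure_ne_top _ _), hC0, measure_univ,
        tsub_self]
    rw [Finset.sum_eq_single_of_mem 0 (Finset.mem_range.mpr hp)]
    · rw [hν]
      simp only [Int.natCast_zero, shiftZ_zero, Measure.map_id]
      exact measure_inter_conull hcompl
    · intro j hj hj0
      simp only [Finset.mem_range] at hj
      have hj1 : 0 < j := Nat.pos_of_ne_zero hj0
      have hCj : ν j (C 0) = 0 := by
        rw [hν, Measure.map_apply (measurable_shiftZ _) (hclosed _).measurableSet,
          preimage_shiftZ_C C hcycle, zero_sub]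
        have hceq : C (-(j : ℤ)) = C (((p - j : ℕ) : ℤ)) := by
          rw [← hper (-(j:ℤ))]
          have e2 : ((p - j : ℕ) : ℤ) = -(j:ℤ) + p := by omega
          rw [e2]
        rw [hceq]
        have hd : Disjoint (C 0) (C ((p - j : ℕ) : ℤ)) := by
          apply hdisj 0 _ le_rfl (by exact_mod_cast Nat.sub_pos_of_lt hj)
            (by exact_mod_cast Nat.sub_lt hp hj1)
        refine le_antisymm ?_ zero_le
        calc lam (C ((p - j : ℕ) : ℤ)) ≤ lam (C 0)ᶜ := by
              apply measure_mono
              intro x hx hx0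
              exact Set.disjoint_left.mp hd hx0 hx
          _ = 0 := hcompl
      refine le_antisymm ?_ zero_le
      calc ν j (B ∩ C 0) ≤ ν j (C 0) := measure_mono Set.inter_subset_right
        _ = 0 := hCj

end Main

/-- for an irreducible SFT `X` of period `p` with cyclically moving classes
`C i`, writing `μ' = p·μ|_{C 0}`, and given Abramov's formula relating the entropy `entS`
of `(X, σ)` and the entropy `entP` of `(C 0, σᵖ)`, one has
`entS μ + ∫ f dμ = (1/p)(entP μ' + ∫ R_p f dμ')`, and `μ` is an equilibrium measure for `f`
on `(X, σ)` iff `μ'` is an equilibrium measure for `R_p f` on `(C 0, σᵖ)`. -/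
theorem stmt14 {A : Type*} [Fintype A] [TopologicalSpace A] [DiscreteTopology A]
    [MeasurableSpace A] [BorelSpace A]
    (X : Set (ℤ → A)) (hX : IsShiftSpace X) (hSFT : IsSFT X) (hirr : IrreducibleShift X)
    (p : ℕ) (hp : 0 < p) (C : ℤ → Set (ℤ → A))
    (hper : ∀ i : ℤ, C (i + p) = C i)
    (hclosed : ∀ i : ℤ, IsClosed (C i))
    (hdisj : ∀ i j : ℤ, 0 ≤ i → i < j → j < p → Disjoint (C i) (C j))
    (hcover : X = ⋃ i ∈ Finset.range p, C (i : ℤ))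
    (hcycle : ∀ i : ℤ, shiftZ 1 '' C i = C (i + 1))
    (f : (ℤ → A) → ℝ) (hf : Continuous f)
    (entS entP : Measure (ℤ → A) → ℝ)
    (hAbramov : ∀ lam : Measure (ℤ → A), IsProbabilityMeasure lam → lam X = 1 →
      lam.map (shiftZ 1) = lam → entP ((p : ℝ≥0∞) • lam.restrict (C 0)) = p * entS lam)
    (μ : Measure (ℤ → A)) (hμprob : IsProbabilityMeasure μ) (hμconc : μ X = 1)
    (hμinv : μ.map (shiftZ 1) = μ) :
    entS μ + ∫ x, f x ∂μ =
      (1 / p) * (entP ((p : ℝ≥0∞) • μ.restrict (C 0)) +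
        ∫ x, Rp p f x ∂((p : ℝ≥0∞) • μ.restrict (C 0))) ∧
    (IsEquilibriumFor entS (shiftZ 1) X f μ ↔
      IsEquilibriumFor entP (shiftZ (p : ℤ)) (C 0) (Rp p f)
        ((p : ℝ≥0∞) • μ.restrict (C 0))) := by
  haveI := hμprob
  have hEconv : ∀ lam : Measure (ℤ → A), IsProbabilityMeasure lam → lam X = 1 →
      lam.map (shiftZ 1) = lam →
      entP ((p : ℝ≥0∞) • lam.restrict (C 0)) +
        ∫ x, Rp p f x ∂((p : ℝ≥0∞) • lam.restrict (C 0)) =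
      p * (entS lam + ∫ x, f x ∂lam) := by
    intro lam hprob hconc hinv
    haveI := hprob
    have hab := hAbramov lam hprob hconc hinv
    have hint := int_Rp p C hcycle hclosed X hp hper hdisj hcover f hf lam hconc hinv
    rw [hab, mul_add]
    have hint' : ∫ (x : ℤ → A), Rp p f x ∂((p : ℝ≥0∞) • lam.restrict (C 0)) =
        (p : ℝ) * ∫ x, f x ∂lam := by
      simpa [Rp] using hint
    rw [hint']
  have hμC0 : (p : ℝ≥0∞) * μ (C 0) = 1 :=
    measure_C0 p C hcycle hclosed X hper hdisj hcover μ hμconc hμinv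
  have hμ'prob : IsProbabilityMeasure ((p : ℝ≥0∞) • μ.restrict (C 0)) := by
    constructor
    rw [Measure.smul_apply, Measure.restrict_apply_univ, smul_eq_mul, hμC0]
  have hμ'C0 : ((p : ℝ≥0∞) • μ.restrict (C 0)) (C 0) = 1 := by
    rw [Measure.smul_apply, Measure.restrict_apply (hclosed 0).measurableSet, Set.inter_self,
      smul_eq_mul, hμC0]
  have hμ'inv : ((p : ℝ≥0∞) • μ.restrict (C 0)).map (shiftZ (p : ℤ)) =
      (p : ℝ≥0∞) • μ.restrict (C 0) := by
    rw [Measure.map_smul, restrict_map C hcycle hclosed μ hμinv (p : ℤ) 0]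
    congr 1
    exact congrArg _ (hper 0)
  have hpR : (p : ℝ) ≠ 0 := Nat.cast_ne_zero.mpr hp.ne'
  constructor
  · rw [hEconv μ hμprob hμconc hμinv, one_div, inv_mul_cancel_left₀ hpR]
  · constructor
    · rintro ⟨-, -, -, hmax⟩
      refine ⟨hμ'prob, hμ'C0, hμ'inv, ?_⟩
      intro lam hlprob hlC0 hlinv
      haveI := hlprob
      obtain ⟨lamBar, hBprob, hBX, hBinv, hBres⟩ :=
        avg_lemma p C hcycle hclosed X hp hper hdisj hcover lam hlC0 hlinv
      have h1 := hEconv lamBar hBprob hBX hBinv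
      rw [hBres] at h1
      have h2 := hmax lamBar hBprob hBX hBinv
      rw [h1, hEconv μ hμprob hμconc hμinv]
      exact mul_le_mul_of_nonneg_left h2 (by positivity)
    · rintro ⟨-, -, -, hmax⟩
      refine ⟨hμprob, hμconc, hμinv, ?_⟩
      intro ρ hρprob hρX hρinv
      haveI := hρprob
      have hρC0 : (p : ℝ≥0∞) * ρ (C 0) = 1 :=
        measure_C0 p C hcycle hclosed X hper hdisj hcover ρ hρX hρinv
      have hρ'prob : IsProbabilityMeasure ((p : ℝ≥0∞) • ρ.restrict (C 0)) := by
        constructor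
        rw [Measure.smul_apply, Measure.restrict_apply_univ, smul_eq_mul, hρC0]
      have hρ'C0 : ((p : ℝ≥0∞) • ρ.restrict (C 0)) (C 0) = 1 := by
        rw [Measure.smul_apply, Measure.restrict_apply (hclosed 0).measurableSet, Set.inter_self,
          smul_eq_mul, hρC0]
      have hρ'inv : ((p : ℝ≥0∞) • ρ.restrict (C 0)).map (shiftZ (p : ℤ)) =
          (p : ℝ≥0∞) • ρ.restrict (C 0) := by
        rw [Measure.map_smul, restrict_map C hcycle hclosed ρ hρinv (p : ℤ) 0]
        congr 1
        exact congrArg _ (hper 0)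
      have h3 := hmax _ hρ'prob hρ'C0 hρ'inv
      rw [hEconv ρ hρprob hρX hρinv, hEconv μ hμprob hμconc hμinv] at h3
      have hppos : (0 : ℝ) < p := by positivity
      exact le_of_mul_le_mul_left h3 hppos
end

section
/- Let X be an irreducible shift of finite type, Y an irreducible sofic shift, and pi: X -> Y an almost invertible one-block factor code with a magic symbol b (b has a unique preimage symbol a, and any preimage point of a point whose 0-coordinate is b has 0-coordinate a). If y and y' are doubly transitive points of Y with (y, y') in the Gibbs relation T_Y, then their unique preimages x = pi^{-1}(y) and x' = pi^{-1}(y') satisfy (x, x') in T_X. -/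
/-- Along an ultrafilter, a sequence in a finite type has a limit value. -/
private lemma exists_ultra_limit {A : Type*} [Finite A] (U : Ultrafilter ℕ) (f : ℕ → A) :
    ∃ a : A, ∀ᶠ k in (U : Filter ℕ), f k = a := by
  by_contra h
  push_neg at h
  have h' : ∀ a : A, {k | f k = a}ᶜ ∈ U := by
    intro a
    rw [Ultrafilter.compl_mem_iff_notMem]
    exact Ultrafilter.compl_mem_iff_notMem.mp (h a)
  have hI : (⋂ a : A, {k | f k = a}ᶜ) ∈ (U : Filter ℕ) := Filter.iInter_mem.2 h'
  obtain ⟨k, hk⟩ := Filter.nonempty_of_mem hI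
  simp only [Set.mem_iInter, Set.mem_compl_iff, Set.mem_setOf_eq] at hk
  exact hk (f k) rfl

/-- Double transitivity yields, for each `k`, shifts `T` (arbitrarily far right and left)
such that `y (· + T)` agrees with `y` on `[-k, k]`. -/
private lemma exists_sync {B : Type*} (Y : Set (ℤ → B)) (y : ℤ → B) (hy : y ∈ Y)
    (hdty : DoublyTransitive Y y) (k : ℕ) :
    (∃ T : ℤ, (k : ℤ) ≤ T ∧ ∀ m : ℤ, -(k : ℤ) ≤ m → m ≤ (k : ℤ) → y (m + T) = y m) ∧
    (∃ T : ℤ, T ≤ -(k : ℤ) ∧ ∀ m : ℤ, -(k : ℤ) ≤ m → m ≤ (k : ℤ) → y (m + T) = y m) := by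
  have hget : ∀ j : Fin (List.ofFn fun j : Fin (2 * k + 1) => y (-(k : ℤ) + (j.1 : ℤ))).length,
      (List.ofFn fun j : Fin (2 * k + 1) => y (-(k : ℤ) + (j.1 : ℤ))).get j
        = y (-(k : ℤ) + (j.1 : ℤ)) := by
    intro j
    rw [List.get_ofFn]
    rfl
  have hlen : (List.ofFn fun j : Fin (2 * k + 1) => y (-(k : ℤ) + (j.1 : ℤ))).length
      = 2 * k + 1 := List.length_ofFn
  have hlang : InLanguage Y (List.ofFn fun j : Fin (2 * k + 1) => y (-(k : ℤ) + (j.1 : ℤ))) :=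
    ⟨y, hy, -(k : ℤ), fun j => (hget j).symm⟩
  have key : ∀ i : ℤ,
      occursAt y (List.ofFn fun j : Fin (2 * k + 1) => y (-(k : ℤ) + (j.1 : ℤ))) i →
      ∀ m : ℤ, -(k : ℤ) ≤ m → m ≤ (k : ℤ) → y (m + (i + (k : ℤ))) = y m := by
    intro i hocc m h1 h2
    have hjlt : (m + (k : ℤ)).toNat
        < (List.ofFn fun j : Fin (2 * k + 1) => y (-(k : ℤ) + (j.1 : ℤ))).length := by
      rw [hlen]; omega
    have h := hocc ⟨(m + (k : ℤ)).toNat, hjlt⟩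
    rw [hget] at h
    have h' : y (i + (((m + (k : ℤ)).toNat : ℕ) : ℤ))
        = y (-(k : ℤ) + (((m + (k : ℤ)).toNat : ℕ) : ℤ)) := h
    rw [show i + (((m + (k : ℤ)).toNat : ℕ) : ℤ) = m + (i + (k : ℤ)) from by omega,
      show -(k : ℤ) + (((m + (k : ℤ)).toNat : ℕ) : ℤ) = m from by omega] at h'
    exact h'
  constructor
  · obtain ⟨i, hik, hocc⟩ := (hdty _ hlang).1 (k : ℤ)
    exact ⟨i + k, by omega, key i hocc⟩
  · obtain ⟨i, hik, hocc⟩ := (hdty _ hlang).2 (-(2 * (k : ℤ)))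
    exact ⟨i + k, by omega, key i hocc⟩

/-- Key synchronization lemma: if `t k` are shifts along which `y (· + t k) → y`
and `y` and `y'` eventually agree at the shifted positions, then both shifted preimages
`x (· + t k)` and `x' (· + t k)` converge (along an ultrafilter) to the unique preimage
of `y`; hence `x` and `x'` agree on a block of radius `n` around some `t k`. -/
private lemma agree_lemma {A B : Type*} [Fintype A]
    (X : Set (ℤ → A)) (n : ℕ) (F : Finset (List A))
    (hXeq : X = {x | ∀ i : ℤ, (List.ofFn fun j : Fin n => x (i + (j.1 : ℤ))) ∉ F})
    (Q : A → B) (y y' : ℤ → B) (x x' : ℤ → A)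
    (hx : x ∈ X) (hx' : x' ∈ X) (hpx : Q ∘ x = y) (hpx' : Q ∘ x' = y')
    (hxuniq : ∀ z, z ∈ X → Q ∘ z = y → z = x)
    (U : Ultrafilter ℕ) (hU : (U : Filter ℕ) ≤ Filter.atTop)
    (t : ℕ → ℤ)
    (ht_sync : ∀ k : ℕ, ∀ m : ℤ, -(k : ℤ) ≤ m → m ≤ (k : ℤ) → y (m + t k) = y m)
    (ht_inf : ∀ j : ℤ, ∀ᶠ k in (U : Filter ℕ), y (j + t k) = y' (j + t k))
    (P : ℕ → Prop) (hP : ∀ᶠ k in (U : Filter ℕ), P k) :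
    ∃ k : ℕ, P k ∧ ∀ j : ℤ, -(n : ℤ) ≤ j → j ≤ (n : ℤ) → x (j + t k) = x' (j + t k) := by
  have hxF : ∀ i : ℤ, (List.ofFn fun j : Fin n => x (i + (j.1 : ℤ))) ∉ F := by
    rw [hXeq] at hx; exact hx
  have hx'F : ∀ i : ℤ, (List.ofFn fun j : Fin n => x' (i + (j.1 : ℤ))) ∉ F := by
    rw [hXeq] at hx'; exact hx'
  choose u hu using fun j : ℤ => exists_ultra_limit U (fun k => x (j + t k))
  choose u' hu' using fun j : ℤ => exists_ultra_limit U (fun k => x' (j + t k))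
  have hbound : ∀ j : ℤ, ∀ᶠ k : ℕ in (U : Filter ℕ), -(k : ℤ) ≤ j ∧ j ≤ (k : ℤ) := by
    intro j
    exact Filter.Eventually.filter_mono hU
      (Filter.eventually_atTop.2 ⟨j.natAbs, fun k hk => by omega⟩)
  have humem : u ∈ X := by
    rw [hXeq]
    intro i
    have hev : ∀ᶠ k in (U : Filter ℕ),
        ∀ j : Fin n, x ((i + (j.1 : ℤ)) + t k) = u (i + (j.1 : ℤ)) :=
      Filter.eventually_all.2 fun j => hu (i + (j.1 : ℤ))
    obtain ⟨k, hk⟩ := hev.exists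
    have heq : (List.ofFn fun j : Fin n => u (i + (j.1 : ℤ)))
        = (List.ofFn fun j : Fin n => x ((i + t k) + (j.1 : ℤ))) := by
      refine congrArg _ (funext fun j => ?_)
      rw [← hk j]
      exact congrArg x (by ring)
    rw [heq]
    exact hxF (i + t k)
  have hu'mem : u' ∈ X := by
    rw [hXeq]
    intro i
    have hev : ∀ᶠ k in (U : Filter ℕ),
        ∀ j : Fin n, x' ((i + (j.1 : ℤ)) + t k) = u' (i + (j.1 : ℤ)) :=
      Filter.eventually_all.2 fun j => hu' (i + (j.1 : ℤ))
    obtain ⟨k, hk⟩ := hev.exists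
    have heq : (List.ofFn fun j : Fin n => u' (i + (j.1 : ℤ)))
        = (List.ofFn fun j : Fin n => x' ((i + t k) + (j.1 : ℤ))) := by
      refine congrArg _ (funext fun j => ?_)
      rw [← hk j]
      exact congrArg x' (by ring)
    rw [heq]
    exact hx'F (i + t k)
  have hQu : Q ∘ u = y := by
    funext j
    obtain ⟨k, hk1, hk2, hk3⟩ := ((hu j).and (hbound j)).exists
    show Q (u j) = y j
    rw [← hk1]
    calc Q (x (j + t k)) = y (j + t k) := congrFun hpx _
      _ = y j := ht_sync k j hk2 hk3
  have hQu' : Q ∘ u' = y := by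
    funext j
    obtain ⟨k, hk1, ⟨hk2, hk3⟩, hk4⟩ := ((hu' j).and ((hbound j).and (ht_inf j))).exists
    show Q (u' j) = y j
    rw [← hk1]
    calc Q (x' (j + t k)) = y' (j + t k) := congrFun hpx' _
      _ = y (j + t k) := hk4.symm
      _ = y j := ht_sync k j hk2 hk3
  have hux : u = x := hxuniq u humem hQu
  have hu'x : u' = x := hxuniq u' hu'mem hQu'
  have hE : ∀ j : ℤ, ∀ᶠ k in (U : Filter ℕ), x (j + t k) = x' (j + t k) := by
    intro j
    filter_upwards [hu j, hu' j] with k h1 h2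
    rw [h1, h2, hux, hu'x]
  have hall : ∀ᶠ k in (U : Filter ℕ), ∀ i : Fin (2 * n + 1),
      x (((i.1 : ℤ) - (n : ℤ)) + t k) = x' (((i.1 : ℤ) - (n : ℤ)) + t k) :=
    Filter.eventually_all.2 fun i => hE _
  obtain ⟨k, hk1, hk2⟩ := (hP.and hall).exists
  refine ⟨k, hk1, fun j hj1 hj2 => ?_⟩
  have hidx : (j + (n : ℤ)).toNat < 2 * n + 1 := by omega
  have h := hk2 ⟨(j + (n : ℤ)).toNat, hidx⟩
  rw [show ((((j + (n : ℤ)).toNat : ℕ) : ℤ) - (n : ℤ)) = j from by omega] at h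
  exact h

/-- let `π = Q ∘ ·` be an almost invertible one-block factor code from an
irreducible SFT `X` onto an irreducible sofic shift `Y`, with a magic symbol `b` whose
unique preimage symbol is `a`. If `y, y'` are doubly transitive points of `Y` that are
Gibbs-related, then their (unique) `π`-preimages are Gibbs-related in `X`. -/
theorem stmt17 {A B : Type*} [Fintype A] [TopologicalSpace A] [DiscreteTopology A]
    [Fintype B] [TopologicalSpace B] [DiscreteTopology B]
    (X : Set (ℤ → A)) (hX : IsShiftSpace X) (hSFT : IsSFT X) (hXirr : IrreducibleShift X)
    (Y : Set (ℤ → B)) (hY : IsShiftSpace Y) (hYirr : IrreducibleShift Y)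
    (Q : A → B) (hfactor : (fun x => Q ∘ x) '' X = Y)
    (hai : ∀ y ∈ Y, DoublyTransitive Y y → ∃! x, x ∈ X ∧ Q ∘ x = y)
    (b : B) (hb : InLanguage Y [b]) (a : A) (hab : Q a = b)
    (huniq : ∀ a' : A, Q a' = b → a' = a)
    (y y' : ℤ → B) (hy : y ∈ Y) (hy' : y' ∈ Y)
    (hdty : DoublyTransitive Y y) (hdty' : DoublyTransitive Y y')
    (hrel : GibbsRel Y y y')
    (x x' : ℤ → A) (hx : x ∈ X) (hx' : x' ∈ X)
    (hpx : Q ∘ x = y) (hpx' : Q ∘ x' = y') :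
    GibbsRel X x x' := by
  obtain ⟨n, F, hXeq⟩ := hSFT
  obtain ⟨-, -, N, hN⟩ := hrel
  obtain ⟨N₁, hN₁0, hNr, hNl⟩ :
      ∃ N₁ : ℤ, 0 ≤ N₁ ∧ (∀ m : ℤ, N₁ < m → y m = y' m) ∧
        (∀ m : ℤ, m < -N₁ → y m = y' m) := by
    refine ⟨|N|, abs_nonneg N, fun m hm => hN m ?_, fun m hm => hN m ?_⟩
    · have h1 := le_abs_self N
      have h2 := le_abs_self m
      linarith
    · have h1 := le_abs_self N
      have h2 := neg_le_abs m
      linarith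
  have hxuniq : ∀ z, z ∈ X → Q ∘ z = y → z = x := by
    obtain ⟨c, -, hcu⟩ := hai y hy hdty
    exact fun z hz hQz => (hcu z ⟨hz, hQz⟩).trans (hcu x ⟨hx, hpx⟩).symm
  have hx'uniq : ∀ z, z ∈ X → Q ∘ z = y' → z = x' := by
    obtain ⟨c, -, hcu⟩ := hai y' hy' hdty'
    exact fun z hz hQz => (hcu z ⟨hz, hQz⟩).trans (hcu x' ⟨hx', hpx'⟩).symm
  have hxF : ∀ i : ℤ, (List.ofFn fun j : Fin n => x (i + (j.1 : ℤ))) ∉ F := by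
    rw [hXeq] at hx; exact hx
  have hx'F : ∀ i : ℤ, (List.ofFn fun j : Fin n => x' (i + (j.1 : ℤ))) ∉ F := by
    rw [hXeq] at hx'; exact hx'
  set U : Ultrafilter ℕ := Ultrafilter.of Filter.atTop with hUdef
  have hU : (U : Filter ℕ) ≤ Filter.atTop := Ultrafilter.of_le _
  choose t ht1 ht2 using fun k : ℕ => (exists_sync Y y hy hdty k).1
  choose s hs1 hs2 using fun k : ℕ => (exists_sync Y y hy hdty k).2
  -- right side
  have ht_inf : ∀ j : ℤ, ∀ᶠ k in (U : Filter ℕ), y (j + t k) = y' (j + t k) := by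
    intro j
    refine Filter.Eventually.filter_mono hU
      (Filter.eventually_atTop.2 ⟨(N₁ + 1 - j).toNat, fun k hk => ?_⟩)
    have h1 := ht1 k
    exact hNr _ (by omega)
  have hPr : ∀ᶠ k in (U : Filter ℕ), N₁ + (n : ℤ) < t k :=
    Filter.Eventually.filter_mono hU
      (Filter.eventually_atTop.2 ⟨(N₁ + (n : ℤ) + 1).toNat, fun k hk => by
        have h1 := ht1 k; omega⟩)
  obtain ⟨kr, hTr, hagr⟩ := agree_lemma X n F hXeq Q y y' x x' hx hx' hpx hpx' hxuniq
    U hU t ht2 ht_inf _ hPr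
  have hright : ∀ m : ℤ, t kr ≤ m → x m = x' m := by
    have hzmem : (fun j : ℤ => if t kr ≤ j then x j else x' j) ∈ X := by
      rw [hXeq]
      intro i
      by_cases hi : t kr ≤ i
      · have heq : (List.ofFn fun j : Fin n =>
            (fun j' : ℤ => if t kr ≤ j' then x j' else x' j') (i + (j.1 : ℤ)))
            = (List.ofFn fun j : Fin n => x (i + (j.1 : ℤ))) := by
          refine congrArg _ (funext fun j => ?_)
          have hj : t kr ≤ i + (j.1 : ℤ) := by omega
          simp only [if_pos hj]
        rw [heq]
        exact hxF i
      · have heq : (List.ofFn fun j : Fin n =>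
            (fun j' : ℤ => if t kr ≤ j' then x j' else x' j') (i + (j.1 : ℤ)))
            = (List.ofFn fun j : Fin n => x' (i + (j.1 : ℤ))) := by
          refine congrArg _ (funext fun j => ?_)
          by_cases hj : t kr ≤ i + (j.1 : ℤ)
          · have hj2 := j.2
            have hx_eq : x (i + (j.1 : ℤ)) = x' (i + (j.1 : ℤ)) := by
              have h := hagr (i + (j.1 : ℤ) - t kr) (by omega) (by omega)
              rw [show i + (j.1 : ℤ) - t kr + t kr = i + (j.1 : ℤ) from by ring] at h
              exact h
            simp only [if_pos hj]
            exact hx_eq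
          · simp only [if_neg hj]
        rw [heq]
        exact hx'F i
    have hQz : Q ∘ (fun j : ℤ => if t kr ≤ j then x j else x' j) = y' := by
      funext j
      show Q (if t kr ≤ j then x j else x' j) = y' j
      by_cases hj : t kr ≤ j
      · rw [if_pos hj]
        calc Q (x j) = y j := congrFun hpx j
          _ = y' j := hNr j (by omega)
      · rw [if_neg hj]
        exact congrFun hpx' j
    have hz := hx'uniq _ hzmem hQz
    intro m hm
    calc x m = (fun j : ℤ => if t kr ≤ j then x j else x' j) m := (if_pos hm).symm
      _ = x' m := congrFun hz m
  -- left side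
  have hs_inf : ∀ j : ℤ, ∀ᶠ k in (U : Filter ℕ), y (j + s k) = y' (j + s k) := by
    intro j
    refine Filter.Eventually.filter_mono hU
      (Filter.eventually_atTop.2 ⟨(N₁ + 1 + j).toNat, fun k hk => ?_⟩)
    have h1 := hs1 k
    exact hNl _ (by omega)
  have hPl : ∀ᶠ k in (U : Filter ℕ), s k < -(N₁ + (n : ℤ)) :=
    Filter.Eventually.filter_mono hU
      (Filter.eventually_atTop.2 ⟨(N₁ + (n : ℤ) + 1).toNat, fun k hk => by
        have h1 := hs1 k; omega⟩)
  obtain ⟨kl, hTl, hagl⟩ := agree_lemma X n F hXeq Q y y' x x' hx hx' hpx hpx' hxuniq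
    U hU s hs2 hs_inf _ hPl
  have hleft : ∀ m : ℤ, m ≤ s kl → x m = x' m := by
    have hzmem : (fun j : ℤ => if j ≤ s kl then x j else x' j) ∈ X := by
      rw [hXeq]
      intro i
      by_cases hi : s kl < i
      · have heq : (List.ofFn fun j : Fin n =>
            (fun j' : ℤ => if j' ≤ s kl then x j' else x' j') (i + (j.1 : ℤ)))
            = (List.ofFn fun j : Fin n => x' (i + (j.1 : ℤ))) := by
          refine congrArg _ (funext fun j => ?_)
          have hj : ¬ (i + (j.1 : ℤ) ≤ s kl) := by omega
          simp only [if_neg hj]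
        rw [heq]
        exact hx'F i
      · have heq : (List.ofFn fun j : Fin n =>
            (fun j' : ℤ => if j' ≤ s kl then x j' else x' j') (i + (j.1 : ℤ)))
            = (List.ofFn fun j : Fin n => x (i + (j.1 : ℤ))) := by
          refine congrArg _ (funext fun j => ?_)
          by_cases hj : i + (j.1 : ℤ) ≤ s kl
          · simp only [if_pos hj]
          · have hj2 := j.2
            have hx_eq : x (i + (j.1 : ℤ)) = x' (i + (j.1 : ℤ)) := by
              have h := hagl (i + (j.1 : ℤ) - s kl) (by omega) (by omega)
              rw [show i + (j.1 : ℤ) - s kl + s kl = i + (j.1 : ℤ) from by ring] at h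
              exact h
            simp only [if_neg hj]
            exact hx_eq.symm
        rw [heq]
        exact hxF i
    have hQz : Q ∘ (fun j : ℤ => if j ≤ s kl then x j else x' j) = y' := by
      funext j
      show Q (if j ≤ s kl then x j else x' j) = y' j
      by_cases hj : j ≤ s kl
      · rw [if_pos hj]
        calc Q (x j) = y j := congrFun hpx j
          _ = y' j := hNl j (by omega)
      · rw [if_neg hj]
        exact congrFun hpx' j
    have hz := hx'uniq _ hzmem hQz
    intro m hm
    calc x m = (fun j : ℤ => if j ≤ s kl then x j else x' j) m := (if_pos hm).symm
      _ = x' m := congrFun hz m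
  -- conclusion
  refine ⟨hx, hx', |t kr| + |s kl|, fun m hm => ?_⟩
  rcases le_or_gt (t kr) m with h | h
  · exact hright m h
  rcases le_or_gt m (s kl) with h' | h'
  · exact hleft m h'
  exfalso
  have h1 := le_abs_self (t kr)
  have h2 := neg_le_abs (s kl)
  have h3 := abs_nonneg (t kr)
  have h4 := abs_nonneg (s kl)
  rcases abs_cases m with ⟨he, -⟩ | ⟨he, -⟩ <;> linarith
end
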